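/- Let L_1,...,L_k be nonzero operators in K[∂;δ] with L = lclm(L_1,...,L_k) of order ℓ, and let n ≥ ℓ. Then the left kernel of the matrix M_n has dimension exactly n − ℓ + 1 over K, with basis given by the vectors v_j = (φ_{n−r_1}(∂^j Q_1), ..., φ_{n−r_k}(∂^j Q_k), φ_n(∂^j L)) for 0 ≤ j ≤ n − ℓ, where L = Q_i L_i. -/

import Mathlib

/-
Setting: a differential field `(K, δ)` (δ additive and Leibniz), and the ring
`A = K[∂;δ]` of linear differential operators, axiomatised as follows:
a ring `A`, a ring embedding `ι : K →+* A`, an element `D = ∂` satisfying the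
commutation rule `∂ a = a ∂ + δ(a)`, together with the fact that every element
of `A` is uniquely of the form `Σ ι(a_i) ∂^i` (the bijection `e`).
-/

noncomputable section

variable {K A : Type*}

/-- Order of a differential operator, read off from its coefficient expansion
(`e.symm x` is the finitely supported family of coefficients of `x` w.r.t. the powers `∂^i`). -/
def ordOf [Zero K] (e : (ℕ →₀ K) ≃ A) (x : A) : ℕ :=
  (e.symm x).support.sup id

/-- `φ_n` : the row vector `(a_n, a_{n-1}, ..., a_0)` of an operator of order `≤ n`. -/
def phiV [Zero K] (e : (ℕ →₀ K) ≃ A) (n : ℕ) (x : A) : Fin (n + 1) → K :=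
  fun j => e.symm x (n - (j : ℕ))

/-- Inverse of `φ_n` : the operator with coefficient vector `(a_n, ..., a_0)`. -/
def phiInv [AddCommMonoid K] (e : (ℕ →₀ K) ≃ A) (n : ℕ) (v : Fin (n + 1) → K) : A :=
  e (∑ j : Fin (n + 1), Finsupp.single (n - (j : ℕ)) (v j))

/-- The Sylvester-type matrix `S_n(P)` of an operator `P` of order `m`:
rows are `φ_n(∂^{n-m} P), ..., φ_n(P)`. -/
def Syl [Zero K] [Monoid A] (e : (ℕ →₀ K) ≃ A) (D : A) (n m : ℕ) (P : A) :
    Matrix (Fin (n - m + 1)) (Fin (n + 1)) K :=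
  Matrix.of fun i j => phiV e n (D ^ (n - m - (i : ℕ)) * P) j

/-- The block matrix `M_n` with diagonal blocks `S_n(L_i)` and a last block row
of negated identity matrices `S_n(-1)`. -/
def Mmat [Field K] [Ring A] (e : (ℕ →₀ K) ≃ A) (D : A) {k : ℕ}
    (L : Fin k → A) (r : Fin k → ℕ) (n : ℕ) :
    Matrix ((Σ i : Fin k, Fin (n - r i + 1)) ⊕ Fin (n + 1)) (Fin k × Fin (n + 1)) K :=
  Matrix.of fun row col =>
    match row with
    | Sum.inl ⟨i, a⟩ => if i = col.1 then Syl e D n (r i) (L i) a col.2 else 0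
    | Sum.inr a => if (a : ℕ) = (col.2 : ℕ) then -1 else 0

/-- `M` is a (nonzero) common left multiple of the family `L`. -/
def IsCLM [Ring A] {k : ℕ} (L : Fin k → A) (M : A) : Prop :=
  M ≠ 0 ∧ ∀ i, ∃ Q, M = Q * L i

/-- `M` is a least common left multiple of the family `L`: a common left multiple
of minimal order. -/
def IsLCLM [Field K] [Ring A] (e : (ℕ →₀ K) ≃ A) {k : ℕ} (L : Fin k → A) (M : A) : Prop :=
  IsCLM L M ∧ ∀ M', IsCLM L M' → ordOf e M ≤ ordOf e M'

end
section Aux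
variable {K A : Type*} [Field K] [Ring A]
variable (ι : K →+* A) (D : A) (e : (ℕ →₀ K) ≃ A)
variable (he : ∀ f : ℕ →₀ K, e f = f.sum fun i a => ι a * D ^ i)
include he

lemma e_zero' : e 0 = 0 := by rw [he]; simp

lemma e_single' (i : ℕ) (a : K) : e (Finsupp.single i a) = ι a * D ^ i := by
  rw [he, Finsupp.sum_single_index]; simp

lemma e_add' (f g : ℕ →₀ K) : e (f + g) = e f + e g := by
  rw [he, he, he]
  exact Finsupp.sum_add_index' (by simp) (by intro i b₁ b₂; rw [map_add, add_mul])

lemma esymm_zero' : e.symm 0 = 0 := by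
  apply e.injective; rw [Equiv.apply_symm_apply, e_zero' ι D e he]

lemma esymm_add' (x y : A) : e.symm (x + y) = e.symm x + e.symm y := by
  apply e.injective
  rw [Equiv.apply_symm_apply, e_add' ι D e he, Equiv.apply_symm_apply, Equiv.apply_symm_apply]

lemma e_sum' {σ : Type*} (s : Finset σ) (f : σ → ℕ →₀ K) :
    e (∑ j ∈ s, f j) = ∑ j ∈ s, e (f j) := by
  classical
  induction s using Finset.induction_on with
  | empty => simpa using e_zero' ι D e he
  | insert _ _ h ih => rw [Finset.sum_insert h, Finset.sum_insert h, e_add' ι D e he, ih]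

lemma esymm_sum' {σ : Type*} (s : Finset σ) (f : σ → A) :
    e.symm (∑ j ∈ s, f j) = ∑ j ∈ s, e.symm (f j) := by
  apply e.injective
  rw [Equiv.apply_symm_apply, e_sum' ι D e he]
  simp

omit he in
lemma coeff_eq_zero_of_gt {x : A} {t : ℕ} (h : ordOf e x < t) : e.symm x t = 0 := by
  by_contra h0
  have := Finset.le_sup (f := id) (Finsupp.mem_support_iff.mpr h0)
  simp only [ordOf] at h
  simp only [id_eq] at this
  omega

omit he in
lemma ord_le_of_forall {x : A} {m : ℕ} (h : ∀ t, m < t → e.symm x t = 0) : ordOf e x ≤ m := by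
  apply Finset.sup_le
  intro b hb
  simp only [id_eq]
  by_contra hbm
  exact (Finsupp.mem_support_iff.mp hb) (h b (by omega))

lemma lc_ne_zero {x : A} (hx : x ≠ 0) : e.symm x (ordOf e x) ≠ 0 := by
  have hne : (e.symm x).support.Nonempty := by
    rw [Finsupp.support_nonempty_iff]
    intro h0
    exact hx (by rw [← e.apply_symm_apply x, h0, e_zero' ι D e he])
  obtain ⟨b, hb, hsup⟩ := Finset.exists_mem_eq_sup _ hne id
  have : ordOf e x = b := hsup
  rw [this]
  exact Finsupp.mem_support_iff.mp hb

lemma iota_mul' (c : K) (x : A) :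
    ι c * x = e (Finsupp.mapRange (c * ·) (mul_zero c) (e.symm x)) := by
  conv_lhs => rw [← e.apply_symm_apply x]
  rw [he, he, Finsupp.sum_mapRange_index (by simp)]
  rw [Finsupp.mul_sum]
  apply Finsupp.sum_congr
  intro i _
  rw [← mul_assoc, ← map_mul]

lemma coeff_iota_mul (c : K) (x : A) (t : ℕ) : e.symm (ι c * x) t = c * e.symm x t := by
  rw [iota_mul' ι D e he, Equiv.symm_apply_apply, Finsupp.mapRange_apply]
end Aux

section Aux2
set_option linter.unusedSectionVars false
variable {K A : Type*} [Field K] [Ring A]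
variable (δ : K →+ K) (ι : K →+* A) (D : A) (e : (ℕ →₀ K) ≃ A)
variable (hcomm : ∀ a : K, D * ι a = ι a * D + ι (δ a))
variable (he : ∀ f : ℕ →₀ K, e f = f.sum fun i a => ι a * D ^ i)
include hcomm he

lemma D_mul' (f : ℕ →₀ K) :
    D * e f = e (f.mapDomain (· + 1)) + e (f.mapRange δ δ.map_zero) := by
  induction f using Finsupp.induction with
  | zero => simp [e_zero' ι D e he]
  | single_add a b f ha hb ih =>
      rw [Finsupp.mapDomain_add, Finsupp.mapRange_add (by simp), Finsupp.mapDomain_single,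
        Finsupp.mapRange_single, e_add' ι D e he, e_add' ι D e he, e_add' ι D e he,
        mul_add, ih, e_single' ι D e he, e_single' ι D e he, e_single' ι D e he,
        ← mul_assoc, hcomm, add_mul, mul_assoc, ← pow_succ']
      abel

omit hcomm he in
lemma injadd1 : Function.Injective (· + 1 : ℕ → ℕ) := fun a b h => by simpa using h

lemma coeff_D_mul_succ (x : A) (t : ℕ) :
    e.symm (D * x) (t + 1) = e.symm x t + δ (e.symm x (t + 1)) := by
  conv_lhs => rw [← e.apply_symm_apply x]
  rw [D_mul' δ ι D e hcomm he, esymm_add' ι D e he, Equiv.symm_apply_apply,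
    Equiv.symm_apply_apply, Finsupp.add_apply, Finsupp.mapRange_apply,
    Finsupp.mapDomain_apply injadd1]

lemma coeff_D_mul_zero (x : A) : e.symm (D * x) 0 = δ (e.symm x 0) := by
  conv_lhs => rw [← e.apply_symm_apply x]
  rw [D_mul' δ ι D e hcomm he, esymm_add' ι D e he, Equiv.symm_apply_apply,
    Equiv.symm_apply_apply, Finsupp.add_apply, Finsupp.mapRange_apply,
    Finsupp.mapDomain_notin_range _ _ (by rintro ⟨t, ht⟩; exact Nat.succ_ne_zero t (by simpa using ht)), zero_add]

lemma coeff_Dpow_mul_bound (i : ℕ) (y : A) :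
    ∀ t, ordOf e y + i < t → e.symm (D ^ i * y) t = 0 := by
  induction i with
  | zero =>
      intro t ht
      rw [pow_zero, one_mul]
      exact coeff_eq_zero_of_gt e (by omega : ordOf e y < t)
  | succ i ih =>
      intro t ht
      rw [pow_succ', mul_assoc]
      match t, ht with
      | t + 1, ht =>
        rw [coeff_D_mul_succ δ ι D e hcomm he, ih t (by omega), ih (t + 1) (by omega),
          map_zero, add_zero]

lemma coeff_Dpow_mul_top (i : ℕ) (y : A) :
    e.symm (D ^ i * y) (ordOf e y + i) = e.symm y (ordOf e y) := by
  induction i with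
  | zero => rw [pow_zero, one_mul, Nat.add_zero]
  | succ i ih =>
      rw [pow_succ', mul_assoc, show ordOf e y + (i + 1) = (ordOf e y + i) + 1 from rfl,
        coeff_D_mul_succ δ ι D e hcomm he, ih,
        coeff_Dpow_mul_bound δ ι D e hcomm he i y _ (by omega), map_zero, add_zero]

lemma ord_Dpow_mul_le (i : ℕ) (y : A) : ordOf e (D ^ i * y) ≤ ordOf e y + i :=
  ord_le_of_forall e (coeff_Dpow_mul_bound δ ι D e hcomm he i y)

omit hcomm in
lemma expand' (x : A) (m : ℕ) (hx : ordOf e x ≤ m) :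
    x = ∑ j : Fin (m + 1), ι (e.symm x (j : ℕ)) * D ^ (j : ℕ) := by
  conv_lhs => rw [← e.apply_symm_apply x, he]
  rw [Fin.sum_univ_eq_sum_range (fun j => ι (e.symm x j) * D ^ j) (m + 1), Finsupp.sum]
  apply Finset.sum_subset
  · intro t ht
    have : t ≤ ordOf e x := by
      have := Finset.le_sup (f := id) ht
      exact this
    simp only [Finset.mem_range]
    omega
  · intro t _ ht
    rw [Finsupp.notMem_support_iff.mp ht, map_zero, zero_mul]

lemma mul_expand (x y : A) :
    x * y = ∑ j : Fin (ordOf e x + 1), ι (e.symm x (j : ℕ)) * (D ^ (j : ℕ) * y) := by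
  conv_lhs => rw [expand' ι D e he x (ordOf e x) le_rfl]
  rw [Finset.sum_mul]
  exact Finset.sum_congr rfl fun j _ => mul_assoc _ _ _

lemma coeff_mul_bound (x y : A) (t : ℕ) (h : ordOf e x + ordOf e y < t) :
    e.symm (x * y) t = 0 := by
  rw [mul_expand δ ι D e hcomm he, esymm_sum' ι D e he, Finsupp.finset_sum_apply]
  apply Finset.sum_eq_zero
  intro j _
  rw [coeff_iota_mul ι D e he,
    coeff_Dpow_mul_bound δ ι D e hcomm he _ y t (by have := j.isLt; omega), mul_zero]

lemma coeff_mul_top (x y : A) :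
    e.symm (x * y) (ordOf e y + ordOf e x) = e.symm x (ordOf e x) * e.symm y (ordOf e y) := by
  rw [mul_expand δ ι D e hcomm he, esymm_sum' ι D e he, Finsupp.finset_sum_apply]
  rw [Finset.sum_eq_single (Fin.last (ordOf e x))]
  · rw [Fin.val_last, coeff_iota_mul ι D e he, coeff_Dpow_mul_top δ ι D e hcomm he]
  · intro b _ hb
    have hblt : (b : ℕ) < ordOf e x := by
      have h1 : (b : ℕ) ≠ ordOf e x := fun hh => hb (Fin.ext (by simpa using hh))
      have := b.isLt; omega
    rw [coeff_iota_mul ι D e he,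
      coeff_Dpow_mul_bound δ ι D e hcomm he _ y _ (by omega), mul_zero]
  · intro hmem; exact absurd (Finset.mem_univ _) hmem

lemma ord_mul' {x y : A} (hx : x ≠ 0) (hy : y ≠ 0) :
    x * y ≠ 0 ∧ ordOf e (x * y) = ordOf e x + ordOf e y := by
  have htop : e.symm (x * y) (ordOf e y + ordOf e x) ≠ 0 := by
    rw [coeff_mul_top δ ι D e hcomm he]
    exact mul_ne_zero (lc_ne_zero ι D e he hx) (lc_ne_zero ι D e he hy)
  have hne : x * y ≠ 0 := by
    intro h0
    rw [h0, esymm_zero' ι D e he] at htop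
    simp at htop
  refine ⟨hne, le_antisymm (ord_le_of_forall e (coeff_mul_bound δ ι D e hcomm he x y)) ?_⟩
  have := Finset.le_sup (f := id) (Finsupp.mem_support_iff.mpr htop)
  simp only [id_eq] at this
  show ordOf e x + ordOf e y ≤ (e.symm (x * y)).support.sup id
  omega

end Aux2

section Aux3
set_option linter.unusedSectionVars false
variable {K A : Type*} [Field K] [Ring A]
variable (δ : K →+ K) (ι : K →+* A) (D : A) (e : (ℕ →₀ K) ≃ A)
variable (hcomm : ∀ a : K, D * ι a = ι a * D + ι (δ a))
variable (he : ∀ f : ℕ →₀ K, e f = f.sum fun i a => ι a * D ^ i)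
include hcomm he

lemma esymm_neg' (x : A) : e.symm (-x) = - e.symm x := by
  have := esymm_add' ι D e he x (-x)
  rw [add_neg_cancel, esymm_zero' ι D e he] at this
  exact (neg_eq_of_add_eq_zero_right this.symm).symm

lemma edivision (y : A) (hy : y ≠ 0) :
    ∀ N, ∀ x : A, ordOf e x ≤ N →
      ∃ q rr : A, x = q * y + rr ∧ (rr = 0 ∨ ordOf e rr < ordOf e y) := by
  intro N
  induction N using Nat.strong_induction_on with
  | _ N ih =>
    intro x hx
    by_cases hxy : ordOf e x < ordOf e y
    · exact ⟨0, x, by simp, Or.inr hxy⟩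
    by_cases hx0 : x = 0
    · exact ⟨0, 0, by simp [hx0], Or.inl rfl⟩
    push_neg at hxy
    set m := ordOf e x - ordOf e y with hm
    set c := e.symm x (ordOf e x) * (e.symm y (ordOf e y))⁻¹ with hc
    set x' := x - ι c * (D ^ m * y) with hx'
    have hsub : ∀ t, e.symm x' t = e.symm x t - c * e.symm (D ^ m * y) t := by
      intro t
      rw [hx', sub_eq_add_neg, esymm_add' ι D e he, esymm_neg' δ ι D e hcomm he,
        Finsupp.add_apply, Finsupp.neg_apply, coeff_iota_mul ι D e he, sub_eq_add_neg]
    have key : ∀ t, ordOf e x ≤ t → e.symm x' t = 0 := by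
      intro t ht
      rcases eq_or_lt_of_le ht with hteq | htlt
      · rw [hsub, ← hteq,
          show e.symm (D ^ m * y) (ordOf e x) = e.symm y (ordOf e y) by
            rw [show ordOf e x = ordOf e y + m by omega, coeff_Dpow_mul_top δ ι D e hcomm he],
          hc, mul_assoc, inv_mul_cancel₀ (lc_ne_zero ι D e he hy), mul_one, sub_self]
      · rw [hsub, coeff_eq_zero_of_gt e htlt,
          coeff_Dpow_mul_bound δ ι D e hcomm he m y t (by omega), mul_zero, sub_zero]
    have hq : x = (ι c * D ^ m) * y + x' := by rw [hx', mul_assoc]; abel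
    by_cases h0 : ordOf e x = 0
    · have hz : x' = 0 := by
        rw [← e.symm.injective.eq_iff, esymm_zero' ι D e he]
        ext t
        exact key t (by omega)
      exact ⟨ι c * D ^ m, 0, by rw [hq, hz], Or.inl rfl⟩
    · have hx'le : ordOf e x' ≤ ordOf e x - 1 :=
        ord_le_of_forall e (fun t ht => key t (by omega))
      obtain ⟨q', rr, hrr, hor⟩ := ih (ordOf e x - 1) (by omega) x' hx'le
      exact ⟨ι c * D ^ m + q', rr, by rw [add_mul, add_assoc, ← hrr, ← hq], hor⟩

end Aux3

section Aux4
set_option linter.unusedSectionVars false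
variable {K A : Type*} [Field K] [Ring A]
variable (ι : K →+* A) (D : A) (e : (ℕ →₀ K) ≃ A)
variable (he : ∀ f : ℕ →₀ K, e f = f.sum fun i a => ι a * D ^ i)
include he

lemma phiInv_eq_sum (m : ℕ) (v : Fin (m + 1) → K) :
    phiInv e m v = ∑ a : Fin (m + 1), ι (v a) * D ^ (m - (a : ℕ)) := by
  rw [phiInv, e_sum' ι D e he]
  exact Finset.sum_congr rfl fun a _ => e_single' ι D e he _ _

lemma coeff_phiInv (m : ℕ) (v : Fin (m + 1) → K) (t : ℕ) :
    e.symm (phiInv e m v) t = if h : t ≤ m then v ⟨m - t, by omega⟩ else 0 := by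
  rw [phiInv, Equiv.symm_apply_apply, Finsupp.finset_sum_apply]
  split
  · rename_i h
    rw [Finset.sum_eq_single (⟨m - t, by omega⟩ : Fin (m + 1))]
    · simp only [Finsupp.single_apply, Fin.val_mk]
      rw [if_pos (by omega)]
    · intro b _ hb
      simp only [Finsupp.single_apply, Fin.val_mk]
      rw [if_neg]
      intro hbt
      exact hb (Fin.ext (by simp only [Fin.val_mk]; have := b.isLt; omega))
    · intro hmem; exact absurd (Finset.mem_univ _) hmem
  · rename_i h
    apply Finset.sum_eq_zero
    intro b _
    rw [Finsupp.single_apply, if_neg (by omega)]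

lemma phiV_phiInv (m : ℕ) (v : Fin (m + 1) → K) : phiV e m (phiInv e m v) = v := by
  funext a
  rw [phiV, coeff_phiInv ι D e he, dif_pos (by omega)]
  congr 1
  exact Fin.ext (by have := a.isLt; simp; omega)

lemma ord_phiInv_le (m : ℕ) (v : Fin (m + 1) → K) : ordOf e (phiInv e m v) ≤ m :=
  ord_le_of_forall e (fun t ht => by rw [coeff_phiInv ι D e he, dif_neg (by omega)])

lemma phiInv_phiV (m : ℕ) (x : A) (hx : ordOf e x ≤ m) : phiInv e m (phiV e m x) = x := by
  rw [← e.symm.injective.eq_iff]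
  ext t
  rw [coeff_phiInv ι D e he]
  split
  · rename_i h
    show e.symm x (m - (m - t)) = e.symm x t
    congr 1; omega
  · rename_i h
    exact (coeff_eq_zero_of_gt e (by omega)).symm

end Aux4

section Aux5
set_option linter.unusedSectionVars false
variable {K A : Type*} [Field K] [Ring A]
variable (δ : K →+ K) (ι : K →+* A) (D : A) (e : (ℕ →₀ K) ≃ A)
variable (hcomm : ∀ a : K, D * ι a = ι a * D + ι (δ a))
variable (he : ∀ f : ℕ →₀ K, e f = f.sum fun i a => ι a * D ^ i)

include hcomm he

omit hcomm in
lemma sum_eq_phiInv_mul (m : ℕ) (v : Fin (m + 1) → K) (Z : A) :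
    ∑ a : Fin (m + 1), ι (v a) * (D ^ (m - (a : ℕ)) * Z) = phiInv e m v * Z := by
  rw [phiInv_eq_sum ι D e he, Finset.sum_mul]
  exact Finset.sum_congr rfl fun a _ => (mul_assoc _ _ _).symm

lemma mem_ker_iff {k : ℕ} (L : Fin k → A) (r : Fin k → ℕ) (n : ℕ)
    (hrn : ∀ i, r i ≤ n) (hordL : ∀ i, ordOf e (L i) ≤ r i)
    (u : ((Σ i : Fin k, Fin (n - r i + 1)) ⊕ Fin (n + 1)) → K) :
    u ∈ LinearMap.ker (Mmat e D L r n).vecMulLinear ↔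
      ∀ i, phiInv e (n - r i) (fun a => u (Sum.inl ⟨i, a⟩)) * L i
           = phiInv e n (fun a => u (Sum.inr a)) := by
  classical
  have hMinl : ∀ (i' : Fin k) (a : Fin (n - r i' + 1)) (i : Fin k) (cc : Fin (n + 1)),
      Mmat e D L r n (Sum.inl ⟨i', a⟩) (i, cc)
        = if i' = i then e.symm (D ^ (n - r i' - (a : ℕ)) * L i') (n - (cc : ℕ)) else 0 := by
    intro i' a i cc; rfl
  have hMinr : ∀ (a : Fin (n + 1)) (i : Fin k) (cc : Fin (n + 1)),
      Mmat e D L r n (Sum.inr a) (i, cc) = if (a : ℕ) = (cc : ℕ) then -1 else 0 := by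
    intro a i cc; rfl
  have hcol : ∀ (i : Fin k) (cc : Fin (n + 1)),
      ((Mmat e D L r n).vecMulLinear u) (i, cc)
        = (∑ a : Fin (n - r i + 1),
            u (Sum.inl ⟨i, a⟩) * e.symm (D ^ (n - r i - (a : ℕ)) * L i) (n - (cc : ℕ)))
          - u (Sum.inr cc) := by
    intro i cc
    rw [Matrix.vecMulLinear_apply]
    show ∑ row, u row * Mmat e D L r n row (i, cc) = _
    rw [Fintype.sum_sum_type, ← Finset.univ_sigma_univ, Finset.sum_sigma]
    have h1 : ∀ i' : Fin k, (∑ a : Fin (n - r i' + 1),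
        u (Sum.inl ⟨i', a⟩) * Mmat e D L r n (Sum.inl ⟨i', a⟩) (i, cc))
        = if i' = i then (∑ a : Fin (n - r i' + 1),
            u (Sum.inl ⟨i', a⟩) * e.symm (D ^ (n - r i' - (a : ℕ)) * L i') (n - (cc : ℕ))) else 0 := by
      intro i'
      simp only [hMinl, mul_ite, mul_zero]
      split <;> simp
    rw [Finset.sum_congr rfl (fun i' _ => h1 i'), Finset.sum_ite_eq' Finset.univ i]
    simp only [Finset.mem_univ, if_true]
    have h2 : (∑ a : Fin (n + 1), u (Sum.inr a) * Mmat e D L r n (Sum.inr a) (i, cc))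
        = - u (Sum.inr cc) := by
      simp only [hMinr, mul_ite, mul_neg_one, mul_zero]
      have : ∀ a : Fin (n + 1), (if (a : ℕ) = (cc : ℕ) then -u (Sum.inr a) else 0)
          = if a = cc then -u (Sum.inr a) else 0 := by
        intro a; congr 1; simp [Fin.ext_iff]
      rw [Finset.sum_congr rfl (fun a _ => this a), Finset.sum_ite_eq' Finset.univ cc]
      simp
    rw [h2, sub_eq_add_neg]
  rw [LinearMap.mem_ker]
  constructor
  · intro h i
    have hcc : ∀ cc : Fin (n + 1),
        (∑ a : Fin (n - r i + 1),
            u (Sum.inl ⟨i, a⟩) * e.symm (D ^ (n - r i - (a : ℕ)) * L i) (n - (cc : ℕ)))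
          = u (Sum.inr cc) := by
      intro cc
      have := congrFun h (i, cc)
      rw [hcol i cc] at this
      have := sub_eq_zero.mp this
      simpa using this
    rw [← sum_eq_phiInv_mul ι D e he]
    apply e.symm.injective
    ext t
    rw [esymm_sum' ι D e he, Finsupp.finset_sum_apply, coeff_phiInv ι D e he]
    by_cases ht : t ≤ n
    · rw [dif_pos ht]
      have := hcc ⟨n - t, by omega⟩
      simp only [Fin.val_mk] at this
      rw [show n - (n - t) = t by omega] at this
      rw [← this]
      exact Finset.sum_congr rfl fun a _ => by rw [coeff_iota_mul ι D e he]
    · rw [dif_neg ht]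
      apply Finset.sum_eq_zero
      intro a _
      rw [coeff_iota_mul ι D e he,
        coeff_Dpow_mul_bound δ ι D e hcomm he _ _ t (by have := hordL i; have := hrn i; omega),
        mul_zero]
  · intro h
    funext p
    obtain ⟨i, cc⟩ := p
    rw [hcol i cc]
    have hX := h i
    rw [← sum_eq_phiInv_mul ι D e he] at hX
    have : (∑ a : Fin (n - r i + 1),
        u (Sum.inl ⟨i, a⟩) * e.symm (D ^ (n - r i - (a : ℕ)) * L i) (n - (cc : ℕ)))
        = e.symm (phiInv e n (fun a => u (Sum.inr a))) (n - (cc : ℕ)) := by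
      rw [← hX, esymm_sum' ι D e he, Finsupp.finset_sum_apply]
      exact Finset.sum_congr rfl fun a _ => by rw [coeff_iota_mul ι D e he]
    rw [this, coeff_phiInv ι D e he, dif_pos (by omega)]
    have hcce : (⟨n - (n - (cc : ℕ)), by omega⟩ : Fin (n + 1)) = cc :=
      Fin.ext (by simp only [Fin.val_mk]; have := cc.isLt; omega)
    rw [hcce]
    simp
end Aux5

set_option maxHeartbeats 1000000 in
/-- the left kernel of `M_n` has dimension `n − ℓ + 1`, with basis
the vectors `v_j = (φ_{n-r₁}(∂^j Q₁), ..., φ_{n-r_k}(∂^j Q_k), φ_n(∂^j L))`,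
`0 ≤ j ≤ n − ℓ`, where `L = lclm(L₁,...,L_k)` has order `ℓ` and `L = Qᵢ Lᵢ`. -/
theorem left_kernel_basis [Field K] [Ring A]
    (δ : K →+ K) (hLeib : ∀ a b : K, δ (a * b) = a * δ b + δ a * b)
    (ι : K →+* A) (D : A)
    (hcomm : ∀ a : K, D * ι a = ι a * D + ι (δ a))
    (e : (ℕ →₀ K) ≃ A)
    (he : ∀ f : ℕ →₀ K, e f = f.sum fun i a => ι a * D ^ i)
    {k : ℕ} (L : Fin k → A) (hL : ∀ i, L i ≠ 0)
    (r : Fin k → ℕ) (hr : ∀ i, ordOf e (L i) = r i)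
    (Lc : A) (hLc : IsLCLM e L Lc)
    (ℓ : ℕ) (hℓ : ordOf e Lc = ℓ)
    (Q : Fin k → A) (hQ : ∀ i, Lc = Q i * L i)
    (n : ℕ) (hn : ℓ ≤ n) :
    ∃ b : Module.Basis (Fin (n - ℓ + 1)) K (LinearMap.ker (Mmat e D L r n).vecMulLinear),
      ∀ j : Fin (n - ℓ + 1),
        (b j : ((Σ i : Fin k, Fin (n - r i + 1)) ⊕ Fin (n + 1)) → K) =
          Sum.elim
            (fun p : Σ i : Fin k, Fin (n - r i + 1) =>
              phiV e (n - r p.1) (D ^ (j : ℕ) * Q p.1) p.2)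
            (fun a : Fin (n + 1) => phiV e n (D ^ (j : ℕ) * Lc) a) := by
  classical
  have hLc0 : Lc ≠ 0 := hLc.1.1
  have hQ0 : ∀ i, Q i ≠ 0 := fun i h => hLc0 (by rw [hQ i, h, zero_mul])
  have hordQ : ∀ i, ordOf e (Q i) + r i = ℓ := by
    intro i
    have h1 := (ord_mul' δ ι D e hcomm he (hQ0 i) (hL i)).2
    rw [← hQ i, hℓ, hr i] at h1
    omega
  have hrn : ∀ i, r i ≤ n := fun i => by have := hordQ i; omega
  have hordL : ∀ i, ordOf e (L i) ≤ r i := fun i => (hr i).le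
  set vv : Fin (n - ℓ + 1) → (((Σ i : Fin k, Fin (n - r i + 1)) ⊕ Fin (n + 1)) → K) :=
    fun j => Sum.elim
      (fun p : Σ i : Fin k, Fin (n - r i + 1) =>
        phiV e (n - r p.1) (D ^ (j : ℕ) * Q p.1) p.2)
      (fun a : Fin (n + 1) => phiV e n (D ^ (j : ℕ) * Lc) a) with hvv
  have hordDQ : ∀ (j : Fin (n - ℓ + 1)) (i : Fin k),
      ordOf e (D ^ (j : ℕ) * Q i) ≤ n - r i := by
    intro j i
    have h1 := ord_Dpow_mul_le δ ι D e hcomm he (j : ℕ) (Q i)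
    have h2 := hordQ i
    have h3 := j.isLt
    omega
  have hordDLc : ∀ j : Fin (n - ℓ + 1), ordOf e (D ^ (j : ℕ) * Lc) ≤ n := by
    intro j
    have h1 := ord_Dpow_mul_le δ ι D e hcomm he (j : ℕ) Lc
    rw [hℓ] at h1
    have h3 := j.isLt
    omega
  have hmem : ∀ j, vv j ∈ LinearMap.ker (Mmat e D L r n).vecMulLinear := by
    intro j
    rw [mem_ker_iff δ ι D e hcomm he L r n hrn hordL]
    intro i
    have h1 : (fun a => vv j (Sum.inl ⟨i, a⟩)) = phiV e (n - r i) (D ^ (j : ℕ) * Q i) := by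
      funext a; simp only [hvv, Sum.elim_inl]
    have h2 : (fun a => vv j (Sum.inr a)) = phiV e n (D ^ (j : ℕ) * Lc) := by
      funext a; simp only [hvv, Sum.elim_inr]
    rw [h1, h2, phiInv_phiV ι D e he _ _ (hordDQ j i), phiInv_phiV ι D e he _ _ (hordDLc j),
      mul_assoc, ← hQ i]
  set vk : Fin (n - ℓ + 1) → LinearMap.ker (Mmat e D L r n).vecMulLinear :=
    fun j => ⟨vv j, hmem j⟩ with hvk
  have hlcc : e.symm Lc ℓ ≠ 0 := by rw [← hℓ]; exact lc_ne_zero ι D e he hLc0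
  have hcoefftop : ∀ j : Fin (n - ℓ + 1),
      e.symm (D ^ (j : ℕ) * Lc) (ℓ + (j : ℕ)) = e.symm Lc ℓ := by
    intro j
    have := coeff_Dpow_mul_top δ ι D e hcomm he (j : ℕ) Lc
    rw [hℓ] at this
    exact this
  have hcoeffbd : ∀ (j : Fin (n - ℓ + 1)) (t : ℕ), ℓ + (j : ℕ) < t →
      e.symm (D ^ (j : ℕ) * Lc) t = 0 := by
    intro j t ht
    apply coeff_Dpow_mul_bound δ ι D e hcomm he
    rw [hℓ]
    omega
  have hkey : ∀ g : Fin (n - ℓ + 1) → K, (∑ j, g j • vv j) = 0 → ∀ j, g j = 0 := by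
    intro g hg
    by_contra hne
    push_neg at hne
    obtain ⟨j1, hj1⟩ := hne
    set S := Finset.univ.filter (fun j => g j ≠ 0) with hS
    have hSne : S.Nonempty := ⟨j1, by simp [hS, hj1]⟩
    set j0 := S.max' hSne with hj0
    have hg0 : g j0 ≠ 0 := by
      have h0 : j0 ∈ S := S.max'_mem hSne
      exact (Finset.mem_filter.mp h0).2
    have hgt : ∀ j : Fin (n - ℓ + 1), j0 < j → g j = 0 := by
      intro j hj
      by_contra hgj
      exact absurd (S.le_max' j (by simp [hS, hgj])) (not_le.mpr hj)
    have hj0n : ℓ + (j0 : ℕ) ≤ n := by have := j0.isLt; omega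
    have hev := congrFun hg (Sum.inr ⟨n - (ℓ + (j0 : ℕ)), by omega⟩)
    rw [Finset.sum_apply] at hev
    simp only [Pi.smul_apply, smul_eq_mul, Pi.zero_apply, hvv, Sum.elim_inr] at hev
    simp only [phiV, Fin.val_mk] at hev
    rw [show n - (n - (ℓ + (j0 : ℕ))) = ℓ + (j0 : ℕ) by omega] at hev
    rw [Finset.sum_eq_single j0] at hev
    · rw [hcoefftop j0] at hev
      exact hg0 ((mul_eq_zero.mp hev).resolve_right hlcc)
    · intro b _ hb
      rcases lt_or_gt_of_ne hb with hlt | hgt'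
      · rw [hcoeffbd b (ℓ + (j0 : ℕ)) (by have := Fin.lt_def.mp hlt; omega), mul_zero]
      · rw [hgt b hgt', zero_mul]
    · intro hmem'; exact absurd (Finset.mem_univ _) hmem'
  have hspan : ∀ u : ((Σ i : Fin k, Fin (n - r i + 1)) ⊕ Fin (n + 1)) → K,
      u ∈ LinearMap.ker (Mmat e D L r n).vecMulLinear →
      ∃ g : Fin (n - ℓ + 1) → K, (∑ j, g j • vv j) = u := by
    intro u hu
    rw [mem_ker_iff δ ι D e hcomm he L r n hrn hordL] at hu
    by_cases hW0 : phiInv e n (fun a => u (Sum.inr a)) = 0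
    · refine ⟨0, ?_⟩
      have hP0 : ∀ i, phiInv e (n - r i) (fun a => u (Sum.inl ⟨i, a⟩)) = 0 := by
        intro i
        by_contra hP
        have h1 := (ord_mul' δ ι D e hcomm he hP (hL i)).1
        rw [hu i, hW0] at h1
        exact h1 rfl
      have hz : ∀ x, u x = 0 := by
        intro x
        cases x with
        | inl p =>
            obtain ⟨i, a⟩ := p
            have h1 := congrFun (phiV_phiInv ι D e he (n - r i)
              (fun a => u (Sum.inl ⟨i, a⟩))) a
            rw [← h1, phiV, hP0 i, esymm_zero' ι D e he]
            rfl
        | inr a =>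
            have h1 := congrFun (phiV_phiInv ι D e he n (fun a => u (Sum.inr a))) a
            rw [← h1, phiV, hW0, esymm_zero' ι D e he]
            rfl
      funext x
      rw [Finset.sum_apply]
      simp [hz x]
    · have hWord : ordOf e (phiInv e n (fun a => u (Sum.inr a))) ≤ n :=
        ord_phiInv_le ι D e he n _
      obtain ⟨R, rr, hdiv, hor⟩ := edivision δ ι D e hcomm he Lc hLc0
        (ordOf e (phiInv e n (fun a => u (Sum.inr a))))
        (phiInv e n (fun a => u (Sum.inr a))) le_rfl
      have hrr : rr = 0 := by
        by_contra hrr0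
        have hclm : IsCLM L rr := by
          refine ⟨hrr0, fun i => ⟨phiInv e (n - r i) (fun a => u (Sum.inl ⟨i, a⟩)) - R * Q i, ?_⟩⟩
          rw [sub_mul, mul_assoc, ← hQ i, hu i]
          rw [hdiv]
          abel
        have hge := hLc.2 rr hclm
        rcases hor with h | h
        · exact hrr0 h
        · omega
      rw [hrr, add_zero] at hdiv
      have hR0 : R ≠ 0 := fun h => hW0 (by rw [hdiv, h, zero_mul])
      have hRord : ordOf e R ≤ n - ℓ := by
        have h1 := (ord_mul' δ ι D e hcomm he hR0 hLc0).2
        rw [← hdiv, hℓ] at h1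
        omega
      have hRex := expand' ι D e he R (n - ℓ) hRord
      have hcombo : ∀ (Z : A) (t : ℕ), e.symm (R * Z) t
          = ∑ j : Fin (n - ℓ + 1), e.symm R (j : ℕ) * e.symm (D ^ (j : ℕ) * Z) t := by
        intro Z t
        conv_lhs => rw [hRex]
        rw [Finset.sum_mul, esymm_sum' ι D e he, Finsupp.finset_sum_apply]
        refine Finset.sum_congr rfl fun j _ => ?_
        rw [mul_assoc, coeff_iota_mul ι D e he]
      have hPi : ∀ i, phiInv e (n - r i) (fun a => u (Sum.inl ⟨i, a⟩)) = R * Q i := by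
        intro i
        have h1 : (phiInv e (n - r i) (fun a => u (Sum.inl ⟨i, a⟩)) - R * Q i) * L i = 0 := by
          rw [sub_mul, mul_assoc, ← hQ i, hu i, ← hdiv, sub_self]
        by_contra hne
        exact (ord_mul' δ ι D e hcomm he (sub_ne_zero.mpr hne) (hL i)).1 h1
      refine ⟨fun j => e.symm R (j : ℕ), ?_⟩
      funext x
      rw [Finset.sum_apply]
      cases x with
      | inl p =>
          obtain ⟨i, a⟩ := p
          have h1 := congrFun (phiV_phiInv ι D e he (n - r i)
            (fun a => u (Sum.inl ⟨i, a⟩))) a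
          rw [hPi i] at h1
          rw [← h1, phiV, hcombo (Q i) (n - r i - (a : ℕ))]
          refine (Finset.sum_congr rfl fun j _ => ?_).symm
          simp only [Pi.smul_apply, smul_eq_mul, hvv, Sum.elim_inl]
          rfl
      | inr a =>
          have h1 := congrFun (phiV_phiInv ι D e he n (fun a => u (Sum.inr a))) a
          rw [hdiv] at h1
          rw [← h1, phiV, hcombo Lc (n - (a : ℕ))]
          refine (Finset.sum_congr rfl fun j _ => ?_).symm
          simp only [Pi.smul_apply, smul_eq_mul, hvv, Sum.elim_inr]
          rfl
  have hli : LinearIndependent K vk := by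
    rw [Fintype.linearIndependent_iff]
    intro g hg
    apply hkey g
    have h1 := congrArg Subtype.val hg
    simpa [hvk] using h1
  have hsp : ⊤ ≤ Submodule.span K (Set.range vk) := by
    rintro ⟨u, hu⟩ -
    rw [Submodule.mem_span_range_iff_exists_fun K]
    obtain ⟨g, hg⟩ := hspan u hu
    refine ⟨g, Subtype.ext ?_⟩
    simpa [hvk] using hg
  refine ⟨Module.Basis.mk hli hsp, fun j => ?_⟩
  rw [Module.Basis.mk_apply]
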